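/- arXiv:1507.08743 — 3 statements merged into one kernel-verified Lean document; each statement's English description precedes it below -/
import Mathlib

section
/- Let a, c be real numbers with 1 + |c|/2 ≤ |a|. Then (1/(2π)²) ∫₀^{2π} ∫₀^{2π} log |2a cos θ₁ + 2 cos θ₂ + c| dθ₁ dθ₂ = log |a|. -/
open Real MeasureTheory intervalIntegral Set Function

noncomputable section MahlerAux

/-- `log |sin x|`. -/
def Lsin (x : ℝ) : ℝ := Real.log |Real.sin x|

lemma Lsin_periodic : Function.Periodic Lsin π := fun x => by
  simp [Lsin, Real.sin_add_pi, abs_neg]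

lemma measurable_Lsin : Measurable Lsin :=
  Real.measurable_log.comp (continuous_abs.comp Real.continuous_sin).measurable

lemma intervalIntegrable_log01 : IntervalIntegrable Real.log volume 0 1 := by
  have hd : IntervalIntegrable (fun x : ℝ => 2 * x ^ (-(1/2) : ℝ)) volume 0 1 :=
    (intervalIntegrable_rpow' (by norm_num)).const_mul 2
  refine hd.mono_fun' Real.measurable_log.aestronglyMeasurable ?_
  refine (ae_restrict_iff' measurableSet_uIoc).2 (Filter.Eventually.of_forall ?_)
  intro x hx
  rw [Set.uIoc_of_le (by norm_num : (0:ℝ) ≤ 1)] at hx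
  obtain ⟨hx0, hx1⟩ := hx
  have hxpow : (0:ℝ) < x ^ (-(1/2) : ℝ) := Real.rpow_pos_of_pos hx0 _
  have h2 : Real.log (x ^ (-(1/2) : ℝ)) ≤ x ^ (-(1/2) : ℝ) - 1 :=
    Real.log_le_sub_one_of_pos hxpow
  rw [Real.log_rpow hx0] at h2
  have hlx : Real.log x ≤ 0 := Real.log_nonpos hx0.le hx1
  have hn : ‖Real.log x‖ = -Real.log x := by
    rw [Real.norm_eq_abs, abs_of_nonpos hlx]
  show ‖Real.log x‖ ≤ 2 * x ^ (-(1/2):ℝ)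
  rw [hn]
  nlinarith [hxpow.le]

lemma intervalIntegrable_log_zero {b : ℝ} (hb : 1 ≤ b) :
    IntervalIntegrable Real.log volume 0 b :=
  intervalIntegrable_log01.trans
    (intervalIntegrable_log (by
      rw [Set.uIcc_of_le hb]
      rintro ⟨h0, -⟩
      norm_num at h0))

/-- `log (sin x)` is interval integrable on `[0, π/2]`. -/
lemma intervalIntegrable_log_sin_half :
    IntervalIntegrable (fun x => Real.log (Real.sin x)) volume 0 (π/2) := by
  have hπ : (1:ℝ) ≤ π / 2 := by nlinarith [Real.pi_gt_three]
  have hd : IntervalIntegrable (fun x : ℝ => ‖Real.log x‖ + Real.log (π/2)) volume 0 (π/2) :=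
    (intervalIntegrable_log_zero hπ).norm.add (intervalIntegrable_const)
  refine hd.mono_fun' ((Real.measurable_log.comp Real.continuous_sin.measurable).aestronglyMeasurable) ?_
  refine (ae_restrict_iff' measurableSet_uIoc).2 (Filter.Eventually.of_forall ?_)
  intro x hx
  rw [Set.uIoc_of_le (by linarith : (0:ℝ) ≤ π/2)] at hx
  obtain ⟨hx0, hx1⟩ := hx
  have hsin_pos : 0 < Real.sin x := Real.sin_pos_of_pos_of_lt_pi hx0 (by nlinarith [Real.pi_pos])
  have hsin_le : Real.sin x ≤ 1 := Real.sin_le_one x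
  have hjordan : 2 / π * x ≤ Real.sin x := Real.mul_le_sin hx0.le hx1
  -- `log (sin x) ≤ 0`, so `‖log (sin x)‖ = -log (sin x) ≤ -log (2x/π) = -log x + log (π/2)`
  have hls : Real.log (Real.sin x) ≤ 0 := Real.log_nonpos hsin_pos.le hsin_le
  have hn : ‖Real.log (Real.sin x)‖ = -Real.log (Real.sin x) := by
    rw [Real.norm_eq_abs, abs_of_nonpos hls]
  show ‖Real.log (Real.sin x)‖ ≤ ‖Real.log x‖ + Real.log (π/2)
  rw [hn]
  have h2 : Real.log (2 / π * x) ≤ Real.log (Real.sin x) :=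
    Real.log_le_log (by positivity) hjordan
  have h3 : Real.log (2 / π * x) = Real.log x - Real.log (π / 2) := by
    rw [Real.log_mul (by positivity) (ne_of_gt hx0), Real.log_div (by norm_num) (ne_of_gt Real.pi_pos),
      Real.log_div (ne_of_gt Real.pi_pos) (by norm_num)]
    ring
  have h4 : -Real.log (Real.sin x) ≤ -Real.log x + Real.log (π/2) := by
    rw [h3] at h2; linarith
  calc -Real.log (Real.sin x) ≤ -Real.log x + Real.log (π/2) := h4
    _ ≤ ‖Real.log x‖ + Real.log (π/2) := by
        have := neg_le_abs (Real.log x); rw [Real.norm_eq_abs]; linarith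


/-- `log (sin x)` is interval integrable on `[0, π]`. -/
lemma intervalIntegrable_log_sin_pi :
    IntervalIntegrable (fun x => Real.log (Real.sin x)) volume 0 π := by
  refine intervalIntegrable_log_sin_half.trans ?_
  have h := intervalIntegrable_log_sin_half.comp_sub_left π
  have heq : (fun x => Real.log (Real.sin (π - x))) = fun x => Real.log (Real.sin x) := by
    funext x; rw [Real.sin_pi_sub]
  rw [heq] at h
  have e : π - π / 2 = π / 2 := by ring
  have h' := h.symm
  rw [e, sub_zero] at h'
  exact h'

lemma Lsin_int_base : IntervalIntegrable Lsin volume 0 π := by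
  refine intervalIntegrable_log_sin_pi.mono_fun measurable_Lsin.aestronglyMeasurable ?_
  refine (ae_restrict_iff' measurableSet_uIoc).2 (Filter.Eventually.of_forall ?_)
  intro x hx
  rw [Set.uIoc_of_le Real.pi_pos.le] at hx
  have hs : 0 ≤ Real.sin x := Real.sin_nonneg_of_nonneg_of_le_pi hx.1.le hx.2
  show ‖Lsin x‖ ≤ ‖Real.log (Real.sin x)‖
  rw [Lsin, abs_of_nonneg hs]

/-- `Lsin` is interval integrable on every interval. -/
lemma Lsin_int (a b : ℝ) : IntervalIntegrable Lsin volume a b := by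
  have hk : ∀ k : ℤ, IntervalIntegrable Lsin volume (k * π) ((k + 1) * π) := by
    intro k
    have h := Lsin_int_base.comp_sub_right (k * π)
    have heq : (fun x => Lsin (x - k * π)) = Lsin := by
      funext x
      simpa using (Lsin_periodic.sub_int_mul_eq (x := x) k)
    rw [heq] at h
    convert h using 1 <;> ring
  have hmn : ∀ n : ℕ, IntervalIntegrable Lsin volume (-(n * π)) (n * π) := by
    intro n
    induction n with
    | zero => simp
    | succ m ih =>
      have h1 : IntervalIntegrable Lsin volume ((m : ℝ) * π) (((m : ℝ) + 1) * π) := by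
        have := hk m; exact_mod_cast this
      have h2 : IntervalIntegrable Lsin volume (-(((m : ℝ) + 1) * π)) (-((m : ℝ) * π)) := by
        have := hk (-(m + 1)); push_cast at this ⊢
        convert this using 1 <;> ring
      push_cast
      exact (h2.trans (by push_cast at ih ⊢; exact ih)).trans h1
  obtain ⟨n, hn⟩ := exists_nat_ge ((|a| + |b|) / π)
  have hnπ : |a| + |b| ≤ n * π := by
    rw [div_le_iff₀ Real.pi_pos] at hn; linarith
  refine (hmn n).mono_set' ?_
  rw [Set.uIoc, Set.uIoc]
  have h1 : -(n * π) ≤ min a b := by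
    have := abs_nonneg a; have := abs_nonneg b
    have := neg_abs_le a; have := neg_abs_le b
    rcases le_total a b with hab | hab <;> simp [min_def, hab] <;> linarith
  have h2 : max a b ≤ n * π := by
    have := abs_nonneg a; have := abs_nonneg b
    have := le_abs_self a; have := le_abs_self b
    rcases le_total a b with hab | hab <;> simp [max_def, hab] <;> linarith
  have hpos : (0:ℝ) ≤ n * π := by positivity
  have h3 : min (-(n*π)) (n*π) = -(n*π) := min_eq_left (by linarith)
  have h4 : max (-(n*π)) (n*π) = n*π := max_eq_right (by linarith)
  rw [h3, h4]
  exact Set.Ioc_subset_Ioc h1 h2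

/-- Half-scaling: `x ↦ Lsin (x/2)` is interval integrable everywhere. -/
lemma Lsin_half_int (a b : ℝ) : IntervalIntegrable (fun x => Lsin (x / 2)) volume a b := by
  have h := (Lsin_int (a * 2⁻¹) (b * 2⁻¹)).comp_mul_right (c := 2⁻¹)
  have e1 : a * 2⁻¹ / 2⁻¹ = a := by field_simp
  have e2 : b * 2⁻¹ / 2⁻¹ = b := by field_simp
  rw [e1, e2] at h
  simpa only [div_eq_mul_inv] using h

/-- Shifted half-scaling integrable. -/
lemma Lsin_shift_int (φ a b : ℝ) :
    IntervalIntegrable (fun θ => Lsin ((θ + φ) / 2)) volume a b := by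
  have h := (Lsin_half_int (a + φ) (b + φ)).comp_add_right φ
  simpa using h


/-- Translation invariance for half-scaled `π`-periodic functions. -/
lemma shift_integral_eq (f : ℝ → ℝ) (hf : Function.Periodic f π) (φ : ℝ) :
    ∫ θ in (0:ℝ)..(2*π), f ((θ + φ)/2) = ∫ θ in (0:ℝ)..(2*π), f (θ/2) := by
  have hg : Function.Periodic (fun x => f (x/2)) (2*π) := by
    intro x
    have e : (x + 2*π)/2 = x/2 + π := by ring
    simp only [e, hf (x/2)]
  have h1 : ∫ θ in (0:ℝ)..(2*π), f ((θ + φ)/2)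
      = ∫ θ in (0+φ:ℝ)..(2*π+φ), f (θ/2) :=
    intervalIntegral.integral_comp_add_right (fun θ => f (θ/2)) φ
  rw [h1]
  have h2 := hg.intervalIntegral_add_eq φ 0
  rw [zero_add] at h2
  rw [show (0:ℝ)+φ = φ by ring, show 2*π+φ = φ+2*π by ring, h2]

lemma Jhalf_eq : ∫ θ in (0:ℝ)..(2*π), Lsin (θ/2) = ∫ θ in (0:ℝ)..(2*π), Lsin θ := by
  have h1 : ∫ θ in (0:ℝ)..(2*π), Lsin (θ/2) = (2:ℝ) • ∫ θ in (0/2:ℝ)..(2*π/2), Lsin θ :=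
    intervalIntegral.integral_comp_div (f := Lsin) (two_ne_zero)
  have h2 : ∫ θ in (0:ℝ)..(2*π), Lsin θ
      = (∫ θ in (0:ℝ)..π, Lsin θ) + ∫ θ in π..(2*π), Lsin θ :=
    (intervalIntegral.integral_add_adjacent_intervals (Lsin_int 0 π) (Lsin_int π (2*π))).symm
  have h3 : ∫ θ in π..(2*π), Lsin θ = ∫ θ in (0:ℝ)..π, Lsin θ := by
    have := Lsin_periodic.intervalIntegral_add_eq π 0
    rw [zero_add] at this
    rw [show 2*π = π + π by ring, this]
  rw [h1, h2, h3, smul_eq_mul]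
  norm_num
  ring

lemma ae_sin_ne_zero : ∀ᵐ x : ℝ, Real.sin x ≠ 0 := by
  have hZ : volume {x : ℝ | Real.sin x = 0} = 0 := by
    refine measure_mono_null (fun x hx => ?_) ((Set.countable_range fun n : ℤ => (n:ℝ) * π).measure_zero _)
    rcases Real.sin_eq_zero_iff.mp hx with ⟨n, hn⟩
    exact ⟨n, hn⟩
  rw [ae_iff]
  simpa only [not_not] using hZ

lemma Lsin_doubling {x : ℝ} (hx : Real.sin x ≠ 0) :
    Lsin x = Real.log 2 + Lsin (x/2) + Lsin ((x+π)/2) := by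
  have hdouble : Real.sin x = 2 * Real.sin (x/2) * Real.cos (x/2) := by
    conv_lhs => rw [show x = 2 * (x/2) by ring, Real.sin_two_mul]
  have hcos : Real.sin ((x+π)/2) = Real.cos (x/2) := by
    rw [show (x+π)/2 = x/2 + π/2 by ring, Real.sin_add_pi_div_two]
  have hs : Real.sin (x/2) ≠ 0 := by
    intro h; apply hx; rw [hdouble, h]; ring
  have hc : Real.cos (x/2) ≠ 0 := by
    intro h; apply hx; rw [hdouble, h]; ring
  rw [Lsin, Lsin, Lsin, hdouble, hcos]
  rw [abs_mul, abs_mul, abs_two]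
  rw [Real.log_mul (by positivity) (abs_ne_zero.2 hc),
    Real.log_mul (two_ne_zero) (abs_ne_zero.2 hs)]

lemma Jval : ∫ θ in (0:ℝ)..(2*π), Lsin (θ/2) = -(2*π) * Real.log 2 := by
  set J := ∫ θ in (0:ℝ)..(2*π), Lsin (θ/2) with hJ
  have hcongr : ∫ θ in (0:ℝ)..(2*π), Lsin θ
      = ∫ θ in (0:ℝ)..(2*π), (Real.log 2 + Lsin (θ/2) + Lsin ((θ+π)/2)) := by
    apply intervalIntegral.integral_congr_ae
    filter_upwards [ae_sin_ne_zero] with x hx _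
    exact Lsin_doubling hx
  have hint1 : IntervalIntegrable (fun θ : ℝ => Real.log 2 + Lsin (θ/2)) volume 0 (2*π) :=
    intervalIntegrable_const.add (Lsin_half_int 0 (2*π))
  have hint2 : IntervalIntegrable (fun θ : ℝ => Lsin ((θ+π)/2)) volume 0 (2*π) :=
    Lsin_shift_int π 0 (2*π)
  have hsum : ∫ θ in (0:ℝ)..(2*π), (Real.log 2 + Lsin (θ/2) + Lsin ((θ+π)/2))
      = (∫ θ in (0:ℝ)..(2*π), (Real.log 2 + Lsin (θ/2)))
        + ∫ θ in (0:ℝ)..(2*π), Lsin ((θ+π)/2) :=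
    intervalIntegral.integral_add hint1 hint2
  have hsum2 : ∫ θ in (0:ℝ)..(2*π), (Real.log 2 + Lsin (θ/2))
      = (∫ _ in (0:ℝ)..(2*π), Real.log 2) + J :=
    intervalIntegral.integral_add intervalIntegrable_const (Lsin_half_int 0 (2*π))
  have hconst : (∫ _ in (0:ℝ)..(2*π), Real.log 2) = 2*π * Real.log 2 := by
    simp [intervalIntegral.integral_const, smul_eq_mul]
  have hshift : ∫ θ in (0:ℝ)..(2*π), Lsin ((θ+π)/2) = J :=
    shift_integral_eq Lsin Lsin_periodic π
  have hKJ : ∫ θ in (0:ℝ)..(2*π), Lsin θ = J := Jhalf_eq.symm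
  rw [hKJ, hsum, hsum2, hconst, hshift] at hcongr
  linarith


lemma ae_sin_shift_ne (φ : ℝ) : ∀ᵐ θ : ℝ, Real.sin ((θ + φ)/2) ≠ 0 := by
  rw [ae_iff]
  simp only [not_not]
  refine measure_mono_null (fun θ hθ => ?_)
    ((Set.countable_range fun n : ℤ => 2*((n:ℝ)*π) - φ).measure_zero _)
  rcases Real.sin_eq_zero_iff.mp hθ with ⟨n, hn⟩
  exact ⟨n, by simp only [Set.mem_setOf_eq] at hθ ⊢; linarith⟩

lemma exists_phi {A y : ℝ} (hA : A ≠ 0) (hy : |y| ≤ 2*|A|) :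
    ∃ φ : ℝ, y = -(2*A*Real.cos φ) := by
  have hA' : (0:ℝ) < |A| := abs_pos.2 hA
  have hb : |(-y)/(2*A)| ≤ 1 := by
    rw [abs_div, abs_neg, abs_mul, abs_two]
    rw [div_le_one (by positivity)]
    exact hy
  have hb' := abs_le.mp hb
  refine ⟨Real.arccos ((-y)/(2*A)), ?_⟩
  rw [Real.cos_arccos hb'.1 hb'.2]
  field_simp

lemma key_pointwise {A y : ℝ} (hA : A ≠ 0) (φ : ℝ) (hy' : y = -(2*A*Real.cos φ)) {θ : ℝ}
    (hs : Real.sin ((θ+φ)/2) ≠ 0) (ht : Real.sin ((θ-φ)/2) ≠ 0) :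
    Real.log |2*A*Real.cos θ + y|
      = Real.log (4*|A|) + Lsin ((θ+φ)/2) + Lsin ((θ-φ)/2) := by
  have hA' : (0:ℝ) < |A| := abs_pos.2 hA
  have e : 2*A*Real.cos θ + y = 2*A*(Real.cos θ - Real.cos φ) := by rw [hy']; ring
  rw [e, Real.cos_sub_cos]
  have e2 : 2*A*(-2 * Real.sin ((θ+φ)/2) * Real.sin ((θ-φ)/2))
      = (-4) * A * Real.sin ((θ+φ)/2) * Real.sin ((θ-φ)/2) := by ring
  rw [e2, abs_mul, abs_mul, abs_mul]
  have h4 : |(-4 : ℝ)| = 4 := by norm_num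
  rw [h4]
  rw [Real.log_mul (by positivity) (abs_ne_zero.2 ht),
    Real.log_mul (by positivity) (abs_ne_zero.2 hs)]
  rfl

lemma key_integral {A y : ℝ} (hA : A ≠ 0) (hy : |y| ≤ 2*|A|) :
    ∫ θ in (0:ℝ)..(2*π), Real.log |2*A*Real.cos θ + y| = 2*π*Real.log |A| := by
  have hA' : (0:ℝ) < |A| := abs_pos.2 hA
  obtain ⟨φ, hy'⟩ := exists_phi hA hy
  have hcongr : ∫ θ in (0:ℝ)..(2*π), Real.log |2*A*Real.cos θ + y|
      = ∫ θ in (0:ℝ)..(2*π),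
          (Real.log (4*|A|) + Lsin ((θ+φ)/2) + Lsin ((θ+(-φ))/2)) := by
    apply intervalIntegral.integral_congr_ae
    filter_upwards [ae_sin_shift_ne φ, ae_sin_shift_ne (-φ)] with θ h1 h2 _
    rw [show θ + -φ = θ - φ by ring] at h2 ⊢
    exact key_pointwise hA φ hy' h1 h2
  have hint1 : IntervalIntegrable (fun θ : ℝ => Real.log (4*|A|) + Lsin ((θ+φ)/2))
      volume 0 (2*π) := intervalIntegrable_const.add (Lsin_shift_int φ 0 (2*π))
  have hsum : ∫ θ in (0:ℝ)..(2*π),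
        (Real.log (4*|A|) + Lsin ((θ+φ)/2) + Lsin ((θ+(-φ))/2))
      = ((∫ _ in (0:ℝ)..(2*π), Real.log (4*|A|))
          + ∫ θ in (0:ℝ)..(2*π), Lsin ((θ+φ)/2))
        + ∫ θ in (0:ℝ)..(2*π), Lsin ((θ+(-φ))/2) := by
    rw [intervalIntegral.integral_add hint1 (Lsin_shift_int (-φ) 0 (2*π)),
      intervalIntegral.integral_add intervalIntegrable_const (Lsin_shift_int φ 0 (2*π))]
  have hconst : (∫ _ in (0:ℝ)..(2*π), Real.log (4*|A|)) = 2*π*Real.log (4*|A|) := by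
    simp [intervalIntegral.integral_const, smul_eq_mul]
  have hs1 : ∫ θ in (0:ℝ)..(2*π), Lsin ((θ+φ)/2) = -(2*π) * Real.log 2 := by
    rw [shift_integral_eq Lsin Lsin_periodic φ, Jval]
  have hs2 : ∫ θ in (0:ℝ)..(2*π), Lsin ((θ+(-φ))/2) = -(2*π) * Real.log 2 := by
    rw [shift_integral_eq Lsin Lsin_periodic (-φ), Jval]
  rw [hcongr, hsum, hconst, hs1, hs2]
  have hlog4 : Real.log (4*|A|) = 2 * Real.log 2 + Real.log |A| := by
    rw [show (4:ℝ)*|A| = 2*(2*|A|) by ring,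
      Real.log_mul two_ne_zero (by positivity),
      Real.log_mul two_ne_zero (ne_of_gt hA')]
    ring
  rw [hlog4]
  ring

/-- Uniform absolute-value constant. -/
def Cabs : ℝ := ∫ θ in (0:ℝ)..(2*π), ‖Lsin (θ/2)‖

lemma key_intervalIntegrable {A y : ℝ} (hA : A ≠ 0) (hy : |y| ≤ 2*|A|) :
    IntervalIntegrable (fun θ => Real.log |2*A*Real.cos θ + y|) volume 0 (2*π) := by
  obtain ⟨φ, hy'⟩ := exists_phi hA hy
  have hg : IntervalIntegrable
      (fun θ : ℝ => ‖Real.log (4*|A|)‖ + ‖Lsin ((θ+φ)/2)‖ + ‖Lsin ((θ+(-φ))/2)‖)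
      volume 0 (2*π) :=
    (intervalIntegrable_const.add (Lsin_shift_int φ 0 (2*π)).norm).add
      (Lsin_shift_int (-φ) 0 (2*π)).norm
  refine hg.mono_fun' ?_ ?_
  · exact (Real.measurable_log.comp
      (continuous_abs.comp (by continuity : Continuous fun θ : ℝ => 2*A*Real.cos θ + y)).measurable).aestronglyMeasurable
  · refine Filter.Eventually.filter_mono (ae_mono Measure.restrict_le_self) ?_
    refine ((ae_sin_shift_ne φ).and (ae_sin_shift_ne (-φ))).mono fun θ hθ => ?_
    obtain ⟨h1, h2⟩ := hθ
    rw [show θ + -φ = θ - φ by ring] at h2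
    show ‖Real.log |2*A*Real.cos θ + y|‖
      ≤ ‖Real.log (4*|A|)‖ + ‖Lsin ((θ+φ)/2)‖ + ‖Lsin ((θ+(-φ))/2)‖
    rw [key_pointwise hA φ hy' h1 h2, show θ + -φ = θ - φ by ring]
    exact (norm_add_le _ _).trans (by gcongr; exact norm_add_le _ _)

lemma key_norm_bound {A y : ℝ} (hA : A ≠ 0) (hy : |y| ≤ 2*|A|) :
    ∫ θ in (0:ℝ)..(2*π), ‖Real.log |2*A*Real.cos θ + y|‖
      ≤ 2*π*‖Real.log (4*|A|)‖ + 2 * Cabs := by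
  obtain ⟨φ, hy'⟩ := exists_phi hA hy
  have habs_per : Function.Periodic (fun x => ‖Lsin x‖) π := fun x => by
    simp [Lsin_periodic x]
  have hg : IntervalIntegrable
      (fun θ : ℝ => ‖Real.log (4*|A|)‖ + ‖Lsin ((θ+φ)/2)‖ + ‖Lsin ((θ+(-φ))/2)‖)
      volume 0 (2*π) :=
    (intervalIntegrable_const.add (Lsin_shift_int φ 0 (2*π)).norm).add
      (Lsin_shift_int (-φ) 0 (2*π)).norm
  have hmono : ∫ θ in (0:ℝ)..(2*π), ‖Real.log |2*A*Real.cos θ + y|‖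
      ≤ ∫ θ in (0:ℝ)..(2*π),
          (‖Real.log (4*|A|)‖ + ‖Lsin ((θ+φ)/2)‖ + ‖Lsin ((θ+(-φ))/2)‖) := by
    refine intervalIntegral.integral_mono_ae (by positivity)
      (key_intervalIntegrable hA hy).norm hg ?_
    filter_upwards [ae_sin_shift_ne φ, ae_sin_shift_ne (-φ)] with θ h1 h2
    rw [show θ + -φ = θ - φ by ring] at h2
    show ‖Real.log |2*A*Real.cos θ + y|‖
      ≤ ‖Real.log (4*|A|)‖ + ‖Lsin ((θ+φ)/2)‖ + ‖Lsin ((θ+(-φ))/2)‖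
    rw [key_pointwise hA φ hy' h1 h2, show θ + -φ = θ - φ by ring]
    exact (norm_add_le _ _).trans (by gcongr; exact norm_add_le _ _)
  have hsum : ∫ θ in (0:ℝ)..(2*π),
        (‖Real.log (4*|A|)‖ + ‖Lsin ((θ+φ)/2)‖ + ‖Lsin ((θ+(-φ))/2)‖)
      = ((∫ _ in (0:ℝ)..(2*π), ‖Real.log (4*|A|)‖)
          + ∫ θ in (0:ℝ)..(2*π), ‖Lsin ((θ+φ)/2)‖)
        + ∫ θ in (0:ℝ)..(2*π), ‖Lsin ((θ+(-φ))/2)‖ := by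
    rw [intervalIntegral.integral_add
        (intervalIntegrable_const.add (Lsin_shift_int φ 0 (2*π)).norm)
        (Lsin_shift_int (-φ) 0 (2*π)).norm,
      intervalIntegral.integral_add intervalIntegrable_const
        (Lsin_shift_int φ 0 (2*π)).norm]
  have hc1 : ∫ θ in (0:ℝ)..(2*π), ‖Lsin ((θ+φ)/2)‖ = Cabs :=
    shift_integral_eq (fun x => ‖Lsin x‖) habs_per φ
  have hc2 : ∫ θ in (0:ℝ)..(2*π), ‖Lsin ((θ+(-φ))/2)‖ = Cabs :=
    shift_integral_eq (fun x => ‖Lsin x‖) habs_per (-φ)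
  have hconst : (∫ _ in (0:ℝ)..(2*π), ‖Real.log (4*|A|)‖) = 2*π*‖Real.log (4*|A|)‖ := by
    simp [intervalIntegral.integral_const, smul_eq_mul]
  rw [hsum, hc1, hc2, hconst] at hmono
  linarith

end MahlerAux

/-- Lemma 2 (`loga`): if `a, c` are real and `1 + |c|/2 ≤ |a|`, then the Mahler measure of
`P_{a,c}(x,y) = a(x + 1/x) + (y + 1/y) + c` equals `log |a|`. -/
theorem mahler_measure_Pac_eq_log_abs (a c : ℝ) (h : 1 + |c| / 2 ≤ |a|) :
    (1 / (2 * π) ^ 2) *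
      ∫ θ₁ in (0:ℝ)..(2 * π), ∫ θ₂ in (0:ℝ)..(2 * π),
        Real.log |2 * a * Real.cos θ₁ + 2 * Real.cos θ₂ + c| =
      Real.log |a| := by
  have hπ : (0:ℝ) < π := Real.pi_pos
  have h2π : (0:ℝ) ≤ 2 * π := by positivity
  have ha1 : (1:ℝ) ≤ |a| := le_trans (by linarith [abs_nonneg c]) h
  have ha : a ≠ 0 := by
    intro h0
    rw [h0, abs_zero] at ha1
    linarith
  have hy : ∀ θ₂ : ℝ, |2 * Real.cos θ₂ + c| ≤ 2 * |a| := by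
    intro θ₂
    calc |2 * Real.cos θ₂ + c| ≤ |2 * Real.cos θ₂| + |c| := abs_add_le _ _
      _ ≤ 2 + |c| := by
          rw [abs_mul, abs_two]
          have := Real.abs_cos_le_one θ₂
          nlinarith
      _ ≤ 2 * |a| := by linarith
  set μ := volume.restrict (Set.Ioc (0:ℝ) (2*π)) with hμ
  have hμuniv : (μ Set.univ).toReal = 2*π := by
    rw [hμ, Measure.restrict_apply_univ, Real.volume_Ioc, sub_zero,
      ENNReal.toReal_ofReal h2π]
  set F : ℝ × ℝ → ℝ := fun p => Real.log |2 * a * Real.cos p.1 + 2 * Real.cos p.2 + c|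
    with hF
  have hmeas : Measurable F := by
    have hc0 : Continuous fun p : ℝ × ℝ => 2 * a * Real.cos p.1 + 2 * Real.cos p.2 + c :=
      (((continuous_const.mul (Real.continuous_cos.comp continuous_fst)).add
        (continuous_const.mul (Real.continuous_cos.comp continuous_snd))).add continuous_const)
    have hc : Continuous fun p : ℝ × ℝ => |2 * a * Real.cos p.1 + 2 * Real.cos p.2 + c| :=
      hc0.abs
    exact Real.measurable_log.comp hc.measurable
  have hslice : ∀ θ₂ : ℝ, (fun θ₁ => F (θ₁, θ₂))
      = fun θ₁ => Real.log |2*a*Real.cos θ₁ + (2*Real.cos θ₂ + c)| := by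
    intro θ₂; funext θ₁; simp only [hF, add_assoc]
  have hint : Integrable F (μ.prod μ) := by
    rw [integrable_prod_iff' hmeas.aestronglyMeasurable]
    constructor
    · refine Filter.Eventually.of_forall fun θ₂ => ?_
      have h1 := (key_intervalIntegrable (A := a) (y := 2*Real.cos θ₂ + c) ha (hy θ₂)).1
      rw [hslice θ₂]
      exact h1
    · refine Integrable.mono'
        (integrable_const (2*π*‖Real.log (4*|a|)‖ + 2 * Cabs)) ?_ ?_
      · exact (hmeas.norm.stronglyMeasurable.integral_prod_left').aestronglyMeasurable
      · refine Filter.Eventually.of_forall fun θ₂ => ?_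
        have hb := key_norm_bound (A := a) (y := 2*Real.cos θ₂ + c) ha (hy θ₂)
        have hnn : 0 ≤ ∫ θ₁, ‖F (θ₁, θ₂)‖ ∂μ :=
          integral_nonneg fun θ₁ => norm_nonneg _
        rw [Real.norm_eq_abs, abs_of_nonneg hnn]
        have heq : ∫ θ₁, ‖F (θ₁, θ₂)‖ ∂μ
            = ∫ θ₁ in (0:ℝ)..(2*π), ‖Real.log |2*a*Real.cos θ₁ + (2*Real.cos θ₂ + c)|‖ := by
          rw [intervalIntegral.integral_of_le h2π]
          apply setIntegral_congr_fun measurableSet_Ioc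
          intro θ₁ _
          simp only [hF, add_assoc]
        rw [heq]
        exact hb
  have hswap : ∫ θ₁ in (0:ℝ)..(2*π), ∫ θ₂ in (0:ℝ)..(2*π),
        Real.log |2 * a * Real.cos θ₁ + 2 * Real.cos θ₂ + c|
      = ∫ θ₂, (∫ θ₁, Real.log |2 * a * Real.cos θ₁ + 2 * Real.cos θ₂ + c| ∂μ) ∂μ := by
    simp only [intervalIntegral.integral_of_le h2π]
    exact MeasureTheory.integral_integral_swap hint
  have hinner : ∀ θ₂ : ℝ, ∫ θ₁, Real.log |2 * a * Real.cos θ₁ + 2 * Real.cos θ₂ + c| ∂μ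
      = 2*π*Real.log |a| := by
    intro θ₂
    have := key_integral (A := a) (y := 2*Real.cos θ₂ + c) ha (hy θ₂)
    rw [intervalIntegral.integral_of_le h2π] at this
    rw [← this]
    apply setIntegral_congr_fun measurableSet_Ioc
    intro θ₁ _
    simp only [add_assoc]
  have houter : ∫ θ₂, (∫ θ₁, Real.log |2 * a * Real.cos θ₁ + 2 * Real.cos θ₂ + c| ∂μ) ∂μ
      = 2*π*(2*π*Real.log |a|) := by
    rw [integral_congr_ae (Filter.Eventually.of_forall hinner),
      MeasureTheory.integral_const, measureReal_def, hμuniv, smul_eq_mul]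
  rw [hswap, houter]
  have : (2*π)^2 ≠ 0 := by positivity
  field_simp
end

section
/- Let a, c ∈ ℂ and assume the Weierstrass curve W : Y² = X³ + (c²/4 − 1 − a²)X² + a²X over ℂ is nonsingular (its discriminant is nonzero). Let s ∈ ℂ satisfy s² = (1 − c/2)² − a², and let t ∈ ℂ satisfy t² = (1 + c/2)² − a². Then S = (1 − c/2 − s, s(1 − c/2 − s)) and T = (1 + c/2 + t, t(1 + c/2 + t)) are points on W, and under the elliptic curve group law 2S = 2T = P, where P = (1, c/2). -/
set_option maxHeartbeats 1000000

open WeierstrassCurve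

private lemma some_congr' {F : Type*} [Field F] {W : Affine F} {x₁ y₁ x₂ y₂ : F}
    (hx : x₁ = x₂) (hy : y₁ = y₂) (h₁ : W.Nonsingular x₁ y₁) (h₂ : W.Nonsingular x₂ y₂) :
    Affine.Point.some _ _ h₁ = Affine.Point.some _ _ h₂ := by
  subst hx; subst hy; rfl

/-- On the nonsingular Weierstrass curve `W : Y² = X³ + (c²/4 − 1 − a²)X² + a²X` over `ℂ`,
with `s² = (1 − c/2)² − a²` and `t² = (1 + c/2)² − a²`, the points
`S = (1 − c/2 − s, s(1 − c/2 − s))` and `T = (1 + c/2 + t, t(1 + c/2 + t))` lie on `W` and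
satisfy `2S = 2T = P`, where `P = (1, c/2)`. -/
theorem halving_points_S_T (a c s t : ℂ)
    (hs : s ^ 2 = (1 - c / 2) ^ 2 - a ^ 2) (ht : t ^ 2 = (1 + c / 2) ^ 2 - a ^ 2)
    (W : Affine ℂ)
    (hW : W = { a₁ := 0, a₂ := c ^ 2 / 4 - 1 - a ^ 2, a₃ := 0, a₄ := a ^ 2, a₆ := 0 })
    (hΔ : W.Δ ≠ 0) :
    ∃ (hS : W.Nonsingular (1 - c / 2 - s) (s * (1 - c / 2 - s)))
      (hT : W.Nonsingular (1 + c / 2 + t) (t * (1 + c / 2 + t)))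
      (hP : W.Nonsingular 1 (c / 2)),
      2 • Affine.Point.some _ _ hS = Affine.Point.some _ _ hP ∧
      2 • Affine.Point.some _ _ hT = Affine.Point.some _ _ hP := by
  have ha1 : W.a₁ = 0 := by rw [hW]
  have ha2 : W.a₂ = c ^ 2 / 4 - 1 - a ^ 2 := by rw [hW]
  have ha3 : W.a₃ = 0 := by rw [hW]
  have ha4 : W.a₄ = a ^ 2 := by rw [hW]
  have ha6 : W.a₆ = 0 := by rw [hW]
  have hΔeq : W.Δ = 16 * a ^ 4 * ((c ^ 2 / 4 - 1 - a ^ 2) ^ 2 - 4 * a ^ 2) := by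
    rw [WeierstrassCurve.Δ, WeierstrassCurve.b₂, WeierstrassCurve.b₄, WeierstrassCurve.b₆,
      WeierstrassCurve.b₈, ha1, ha2, ha3, ha4, ha6]
    ring
  have ha : a ≠ 0 := by
    intro h
    exact hΔ (by rw [hΔeq, h]; ring)
  have hq : (c ^ 2 / 4 - 1 - a ^ 2) ^ 2 - 4 * a ^ 2 ≠ 0 := by
    intro h
    exact hΔ (by rw [hΔeq, h, mul_zero])
  have hs0 : s ≠ 0 := by
    intro h
    rw [h] at hs
    exact hq (by linear_combination (a ^ 2 + (1 - c / 2) ^ 2 - 2 * (c ^ 2 / 4 - 1) - 4) * hs)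
  have ht0 : t ≠ 0 := by
    intro h
    rw [h] at ht
    exact hq (by linear_combination (a ^ 2 + (1 + c / 2) ^ 2 - 2 * (c ^ 2 / 4 - 1) - 4) * ht)
  have hxS : 1 - c / 2 - s ≠ 0 := by
    intro h
    exact pow_ne_zero 2 ha (by linear_combination (1 - c / 2 + s) * h + hs)
  have hxT : 1 + c / 2 + t ≠ 0 := by
    intro h
    exact pow_ne_zero 2 ha (by linear_combination (1 + c / 2 - t) * h + ht)
  have hS : W.Nonsingular (1 - c / 2 - s) (s * (1 - c / 2 - s)) := by
    refine (W.equation_iff_nonsingular_of_Δ_ne_zero hΔ).mp ?_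
    rw [Affine.equation_iff, ha1, ha2, ha3, ha4, ha6]
    linear_combination ((1 - c / 2 - s) * (1 - c / 2 - s - 1)) * hs
  have hT : W.Nonsingular (1 + c / 2 + t) (t * (1 + c / 2 + t)) := by
    refine (W.equation_iff_nonsingular_of_Δ_ne_zero hΔ).mp ?_
    rw [Affine.equation_iff, ha1, ha2, ha3, ha4, ha6]
    linear_combination ((1 + c / 2 + t) * (1 + c / 2 + t - 1)) * ht
  have hP : W.Nonsingular 1 (c / 2) := by
    refine (W.equation_iff_nonsingular_of_Δ_ne_zero hΔ).mp ?_
    rw [Affine.equation_iff, ha1, ha2, ha3, ha4, ha6]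
    ring
  have ha2s : a ^ 2 = (1 - c / 2) ^ 2 - s ^ 2 := by linear_combination hs
  have ha2t : a ^ 2 = (1 + c / 2) ^ 2 - t ^ 2 := by linear_combination ht
  refine ⟨hS, hT, hP, ?_, ?_⟩
  · have hyS : s * (1 - c / 2 - s) ≠ W.negY (1 - c / 2 - s) (s * (1 - c / 2 - s)) := by
      rw [Affine.negY, ha1, ha3]
      intro h
      exact mul_ne_zero hs0 hxS (by linear_combination h / 2)
    have hden : (2 : ℂ) * (s * (1 - c / 2 - s)) ≠ 0 :=
      mul_ne_zero two_ne_zero (mul_ne_zero hs0 hxS)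
    have hslope : W.slope (1 - c / 2 - s) (1 - c / 2 - s) (s * (1 - c / 2 - s))
        (s * (1 - c / 2 - s)) = (3 * (1 - c / 2 - s) ^ 2
          + 2 * (c ^ 2 / 4 - 1 - a ^ 2) * (1 - c / 2 - s) + a ^ 2)
          / (2 * (s * (1 - c / 2 - s))) := by
      rw [Affine.slope_of_Y_ne rfl hyS]
      simp only [Affine.negY, ha1, ha2, ha3, ha4]
      congr 1 <;> ring
    have hX : W.addX (1 - c / 2 - s) (1 - c / 2 - s)
        (W.slope (1 - c / 2 - s) (1 - c / 2 - s) (s * (1 - c / 2 - s))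
          (s * (1 - c / 2 - s))) = 1 := by
      simp only [Affine.addX, hslope, ha1, ha2, zero_mul, add_zero]
      rw [ha2s]
      refine mul_right_cancel₀ (pow_ne_zero 2 hden) ?_
      rw [div_pow, sub_mul, sub_mul, sub_mul, div_mul_cancel₀ _ (pow_ne_zero 2 hden)]
      ring
    have hY : W.addY (1 - c / 2 - s) (1 - c / 2 - s) (s * (1 - c / 2 - s))
        (W.slope (1 - c / 2 - s) (1 - c / 2 - s) (s * (1 - c / 2 - s))
          (s * (1 - c / 2 - s))) = c / 2 := by
      simp only [Affine.addY, Affine.negAddY, hX, Affine.negY, ha1, ha3, zero_mul, sub_zero]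
      rw [hslope, ha2s]
      refine mul_right_cancel₀ hden ?_
      rw [neg_mul, add_mul, mul_right_comm, div_mul_cancel₀ _ hden]
      ring
    rw [two_nsmul, Affine.Point.add_self_of_Y_ne hyS]
    exact some_congr' hX hY _ _
  · have hyT : t * (1 + c / 2 + t) ≠ W.negY (1 + c / 2 + t) (t * (1 + c / 2 + t)) := by
      rw [Affine.negY, ha1, ha3]
      intro h
      exact mul_ne_zero ht0 hxT (by linear_combination h / 2)
    have hden : (2 : ℂ) * (t * (1 + c / 2 + t)) ≠ 0 :=
      mul_ne_zero two_ne_zero (mul_ne_zero ht0 hxT)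
    have hslope : W.slope (1 + c / 2 + t) (1 + c / 2 + t) (t * (1 + c / 2 + t))
        (t * (1 + c / 2 + t)) = (3 * (1 + c / 2 + t) ^ 2
          + 2 * (c ^ 2 / 4 - 1 - a ^ 2) * (1 + c / 2 + t) + a ^ 2)
          / (2 * (t * (1 + c / 2 + t))) := by
      rw [Affine.slope_of_Y_ne rfl hyT]
      simp only [Affine.negY, ha1, ha2, ha3, ha4]
      congr 1 <;> ring
    have hX : W.addX (1 + c / 2 + t) (1 + c / 2 + t)
        (W.slope (1 + c / 2 + t) (1 + c / 2 + t) (t * (1 + c / 2 + t))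
          (t * (1 + c / 2 + t))) = 1 := by
      simp only [Affine.addX, hslope, ha1, ha2, zero_mul, add_zero]
      rw [ha2t]
      refine mul_right_cancel₀ (pow_ne_zero 2 hden) ?_
      rw [div_pow, sub_mul, sub_mul, sub_mul, div_mul_cancel₀ _ (pow_ne_zero 2 hden)]
      ring
    have hY : W.addY (1 + c / 2 + t) (1 + c / 2 + t) (t * (1 + c / 2 + t))
        (W.slope (1 + c / 2 + t) (1 + c / 2 + t) (t * (1 + c / 2 + t))
          (t * (1 + c / 2 + t))) = c / 2 := by
      simp only [Affine.addY, Affine.negAddY, hX, Affine.negY, ha1, ha3, zero_mul, sub_zero]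
      rw [hslope, ha2t]
      refine mul_right_cancel₀ hden ?_
      rw [neg_mul, add_mul, mul_right_comm, div_mul_cancel₀ _ hden]
      ring
    rw [two_nsmul, Affine.Point.add_self_of_Y_ne hyT]
    exact some_congr' hX hY _ _
end

section
/- Let a, c ∈ ℂ and assume the Weierstrass curve W : Y² = X³ + (c²/4 − 1 − a²)X² + a²X over ℂ is nonsingular (its discriminant is nonzero). Let s ∈ ℂ satisfy s² = (1 − c/2)² − a², and define the points S₊ = (1 − c/2 − s, s(1 − c/2 − s)) and S₋ = (1 − c/2 + s, −s(1 − c/2 + s)) on W. Then under the elliptic curve group law S₊ + S₋ = −Q, where Q = (a², c a²/2), i.e. S₊ + S₋ = (a², −c a²/2). -/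
open WeierstrassCurve

lemma some_eq_some_aux {W : WeierstrassCurve.Affine ℂ} {x₁ y₁ x₂ y₂ : ℂ}
    (hx : x₁ = x₂) (hy : y₁ = y₂) (h₁ : W.Nonsingular x₁ y₁) (h₂ : W.Nonsingular x₂ y₂) :
    Affine.Point.some _ _ h₁ = Affine.Point.some _ _ h₂ := by
  subst hx; subst hy; rfl

/-- On the nonsingular Weierstrass curve `W : Y² = X³ + (c²/4 − 1 − a²)X² + a²X` over `ℂ`,
with `s² = (1 − c/2)² − a²`, the points `S₊ = (1 − c/2 − s, s(1 − c/2 − s))` and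
`S₋ = (1 − c/2 + s, −s(1 − c/2 + s))` satisfy `S₊ + S₋ = −Q = (a², −ca²/2)`, where
`Q = (a², ca²/2)`. -/
theorem sum_S_plus_S_minus (a c s : ℂ) (hs : s ^ 2 = (1 - c / 2) ^ 2 - a ^ 2)
    (W : Affine ℂ)
    (hW : W = { a₁ := 0, a₂ := c ^ 2 / 4 - 1 - a ^ 2, a₃ := 0, a₄ := a ^ 2, a₆ := 0 })
    (hΔ : W.Δ ≠ 0) :
    ∃ (hSp : W.Nonsingular (1 - c / 2 - s) (s * (1 - c / 2 - s)))
      (hSm : W.Nonsingular (1 - c / 2 + s) (-s * (1 - c / 2 + s)))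
      (hQ : W.Nonsingular (a ^ 2) (c * a ^ 2 / 2))
      (hQ' : W.Nonsingular (a ^ 2) (-(c * a ^ 2 / 2))),
      Affine.Point.some _ _ hSp + Affine.Point.some _ _ hSm = Affine.Point.some _ _ hQ' ∧
      Affine.Point.some _ _ hSp + Affine.Point.some _ _ hSm = -Affine.Point.some _ _ hQ := by
  subst hW
  set W : Affine ℂ :=
    { a₁ := 0, a₂ := c ^ 2 / 4 - 1 - a ^ 2, a₃ := 0, a₄ := a ^ 2, a₆ := 0 } with hWdef
  have ha₁ : W.a₁ = 0 := rfl
  have ha₂ : W.a₂ = c ^ 2 / 4 - 1 - a ^ 2 := rfl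
  have ha₃ : W.a₃ = 0 := rfl
  have ha₄ : W.a₄ = a ^ 2 := rfl
  have ha₆ : W.a₆ = 0 := rfl
  have hs0 : s ≠ 0 := by
    intro h
    apply hΔ
    subst h
    have ha : a ^ 2 = (1 - c / 2) ^ 2 := by linear_combination hs
    simp only [WeierstrassCurve.Δ, b₂, b₄, b₆, b₈, ha₁, ha₂, ha₃, ha₄, ha₆]
    linear_combination (16 * a ^ 4 * (a ^ 2 - (1 + c / 2) ^ 2)) * ha
  have hSp : W.Nonsingular (1 - c / 2 - s) (s * (1 - c / 2 - s)) := by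
    refine (Affine.equation_iff_nonsingular_of_Δ_ne_zero hΔ).mp ?_
    rw [Affine.equation_iff, ha₁, ha₂, ha₃, ha₄, ha₆]
    linear_combination ((1 - c / 2 - s) ^ 2 - (1 - c / 2 - s)) * hs
  have hSm : W.Nonsingular (1 - c / 2 + s) (-s * (1 - c / 2 + s)) := by
    refine (Affine.equation_iff_nonsingular_of_Δ_ne_zero hΔ).mp ?_
    rw [Affine.equation_iff, ha₁, ha₂, ha₃, ha₄, ha₆]
    linear_combination ((1 - c / 2 + s) ^ 2 - (1 - c / 2 + s)) * hs
  have hQ : W.Nonsingular (a ^ 2) (c * a ^ 2 / 2) := by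
    refine (Affine.equation_iff_nonsingular_of_Δ_ne_zero hΔ).mp ?_
    rw [Affine.equation_iff, ha₁, ha₂, ha₃, ha₄, ha₆]
    ring
  have hQ' : W.Nonsingular (a ^ 2) (-(c * a ^ 2 / 2)) := by
    refine (Affine.equation_iff_nonsingular_of_Δ_ne_zero hΔ).mp ?_
    rw [Affine.equation_iff, ha₁, ha₂, ha₃, ha₄, ha₆]
    ring
  have hxne : (1 - c / 2 - s) ≠ (1 - c / 2 + s) :=
    fun h => hs0 (by linear_combination (-1 / 2 : ℂ) * h)
  have hslope : W.slope (1 - c / 2 - s) (1 - c / 2 + s) (s * (1 - c / 2 - s))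
      (-s * (1 - c / 2 + s)) = -(1 - c / 2) := by
    have h2s : (1 - c / 2 - s) - (1 - c / 2 + s) ≠ 0 := sub_ne_zero.mpr hxne
    rw [Affine.slope_of_X_ne hxne, div_eq_iff h2s]
    ring
  have hX : W.addX (1 - c / 2 - s) (1 - c / 2 + s)
      (W.slope (1 - c / 2 - s) (1 - c / 2 + s) (s * (1 - c / 2 - s)) (-s * (1 - c / 2 + s)))
      = a ^ 2 := by
    rw [hslope, Affine.addX, ha₁, ha₂]
    ring
  have hY : W.addY (1 - c / 2 - s) (1 - c / 2 + s) (s * (1 - c / 2 - s))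
      (W.slope (1 - c / 2 - s) (1 - c / 2 + s) (s * (1 - c / 2 - s)) (-s * (1 - c / 2 + s)))
      = -(c * a ^ 2 / 2) := by
    rw [hslope, Affine.addY, Affine.negAddY, Affine.negY, Affine.addX, ha₁, ha₂, ha₃]
    linear_combination hs
  have hnegY : W.negY (a ^ 2) (c * a ^ 2 / 2) = -(c * a ^ 2 / 2) := by
    rw [Affine.negY, ha₁, ha₃]; ring
  refine ⟨hSp, hSm, hQ, hQ', ?_, ?_⟩
  · rw [Affine.Point.add_of_X_ne hxne]
    exact some_eq_some_aux hX hY _ _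
  · rw [Affine.Point.add_of_X_ne hxne, Affine.Point.neg_some]
    exact some_eq_some_aux hX (hY.trans hnegY.symm) _ _
end
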